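/- Under Hypothesis (H), set f = P/Q. For every natural number i there exist g_i in k(x,y) and a_i in k(x)[y] with deg_y(a_i) < d_y* such that D_x^i(f) = D_y(g_i) + a_i/Q*. Moreover, for any such choice, the d_y* + 1 rational functions r_0 = a_0/Q*, r_1 = a_1/Q*, …, r_{d_y*} = a_{d_y*}/Q* are linearly dependent over k(x). -/

import Mathlib

open Polynomial

noncomputable section

/-- A map is a derivation: it is additive and satisfies the Leibniz rule. -/
def IsDeriv {F : Type*} [CommRing F] (D : F → F) : Prop :=
  (∀ a b, D (a + b) = D a + D b) ∧ ∀ a b, D (a * b) = a * D b + b * D a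

/-- Degree in `x` of an element of `k[x][y]` (inner variable `x`, outer variable `y`). -/
def degX {k : Type*} [Field k] (Q : Polynomial (Polynomial k)) : ℕ :=
  Q.support.sup fun i => (Q.coeff i).natDegree

/-- Partial derivative with respect to `x` on `k[x][y]`. -/
def derivX {k : Type*} [Field k] (Q : Polynomial (Polynomial k)) : Polynomial (Polynomial k) :=
  Q.sum fun i a => Polynomial.C (Polynomial.derivative a) * Polynomial.X ^ i

/-- The embedding `k[x][y] → k(x)(y)`. -/
def toF {k : Type*} [Field k] : Polynomial (Polynomial k) →+* RatFunc (RatFunc k) :=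
  (algebraMap (Polynomial (RatFunc k)) (RatFunc (RatFunc k))).comp
    (Polynomial.mapRingHom (algebraMap (Polynomial k) (RatFunc k)))

/-- The embedding `k(x) → k(x)(y)`. -/
def ratToF {k : Type*} [Field k] : RatFunc k →+* RatFunc (RatFunc k) :=
  (algebraMap (Polynomial (RatFunc k)) (RatFunc (RatFunc k))).comp
    (Polynomial.C : RatFunc k →+* Polynomial (RatFunc k))

/-- The embedding `k(x)[y] → k(x)(y)`. -/
def kyToF {k : Type*} [Field k] : Polynomial (RatFunc k) →+* RatFunc (RatFunc k) :=
  algebraMap (Polynomial (RatFunc k)) (RatFunc (RatFunc k))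

/-- The embedding `k[x][y] → k(x)[y]`. -/
def toKy {k : Type*} [Field k] : Polynomial (Polynomial k) →+* Polynomial (RatFunc k) :=
  Polynomial.mapRingHom (algebraMap (Polynomial k) (RatFunc k))

/-- The embedding `k[y] → k[x][y]` (a polynomial in `y` viewed in `k[x][y]`). -/
def yToXY {k : Type*} [Field k] : Polynomial k →+* Polynomial (Polynomial k) :=
  Polynomial.mapRingHom (Polynomial.C : k →+* Polynomial k)

/-- The Hermite matrix associated with a factorisation `Q = Qs * Qneg`, with respect to the
monomial bases: its columns are the coefficient vectors (in `y`, coefficients in `k[x]`) of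
`Qs * D_y(y^j) - E * y^j` for `j < dm` (where `E = Qs * D_y(Qneg) / Qneg`) and of
`Qneg * y^j` for `j < dy - dm`. -/
def hermiteMat {k : Type*} [Field k] (Qs Qneg E : Polynomial (Polynomial k)) (dy dm : ℕ) :
    Matrix (Fin dy) (Fin dy) (Polynomial k) :=
  Matrix.of fun i j =>
    if (j : ℕ) < dm then
      (Qs * Polynomial.derivative (Polynomial.X ^ (j : ℕ)) - E * Polynomial.X ^ (j : ℕ)).coeff i
    else
      (Qneg * Polynomial.X ^ ((j : ℕ) - dm)).coeff i

section DerivBasics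
variable {F : Type*} [Field F] {D : F → F}

lemma isDeriv_zero (hD : IsDeriv D) : D 0 = 0 := by
  have := hD.1 0 0; simpa using this

lemma isDeriv_neg (hD : IsDeriv D) (x : F) : D (-x) = - D x := by
  have h := hD.1 x (-x)
  rw [add_neg_cancel, isDeriv_zero hD] at h
  linear_combination -h

lemma isDeriv_div (hD : IsDeriv D) (x y : F) (hy : y ≠ 0) :
    D (x / y) = (D x * y - x * D y) / y ^ 2 := by
  have h : x = y * (x / y) := (mul_div_cancel₀ x hy).symm
  have h2 : D x = y * D (x / y) + (x / y) * D y := by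
    conv_lhs => rw [h]
    exact hD.2 y (x / y)
  rw [eq_div_iff (pow_ne_zero 2 hy)]
  linear_combination D y * h - y * h2
end DerivBasics

lemma antideriv {K : Type*} [Field K] [CharZero K] (A : K[X]) :
    ∃ B : K[X], Polynomial.derivative B = A := by
  induction A using Polynomial.induction_on' with
  | add p q hp hq =>
    obtain ⟨B1, h1⟩ := hp; obtain ⟨B2, h2⟩ := hq
    exact ⟨B1 + B2, by simp [h1, h2]⟩
  | monomial n a =>
    refine ⟨Polynomial.monomial (n+1) (a / (n+1)), ?_⟩
    rw [Polynomial.derivative_monomial]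
    simp only [Nat.add_sub_cancel]
    congr 1
    have : ((n:K) + 1) ≠ 0 := Nat.cast_add_one_ne_zero n
    push_cast
    field_simp

lemma fieldid1 {F : Type*} [Field F] (t s' W W' γ ν X X' : F) (ht : t ≠ 0) (hγ : γ * ν = 1)
    (hX : X = γ * W) (hX' : X' = γ * W') (p : ℕ) :
    (X' * t^(p+1) - X*(ν * t^p * s')) / (t^(p+1))^2 = X'/t^(p+1) - W*s'/t^(p+2) := by
  subst hX hX'
  have h2 : t^(p+2) ≠ 0 := pow_ne_zero _ ht
  field_simp
  ring_nf
  linear_combination (-(W * s' * t^(2*p+2))) * hγ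

lemma fieldid2 {F : Type*} [Field F] (s s' X1 W X' a : F) (hs : s ≠ 0) (p : ℕ)
    (ha : a = X1 * s + W * s') :
    a / s^(p+2) = (X1 + X')/s^(p+1) - (X'/s^(p+1) - W*s'/s^(p+2)) := by
  rw [ha]; field_simp; ring

section Hermite
variable {K : Type*} [Field K] [CharZero K]
local notation "alg" => algebraMap (Polynomial K) (RatFunc K)

lemma hermite (D : RatFunc K → RatFunc K) (hD : IsDeriv D)
    (hDval : ∀ A : K[X], D (alg A) = alg (Polynomial.derivative A))
    (S : K[X]) (hS : IsCoprime S (Polynomial.derivative S)) (e : ℕ) (A : K[X]) :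
    ∃ (g : RatFunc K) (a : K[X]), a.degree < (S.natDegree : WithBot ℕ) ∧
      alg A / (alg S) ^ e = D g + alg a / alg S := by
  have hS0 : S ≠ 0 := by
    rintro rfl
    rw [derivative_zero] at hS
    exact not_isUnit_zero (isCoprime_zero_left.mp hS)
  have hSf0 : (alg S) ≠ 0 := fun h => hS0
    ((map_eq_zero_iff _ (IsFractionRing.injective _ _)).mp h)
  induction e generalizing A with
  | zero =>
    obtain ⟨B, hB⟩ := antideriv A
    refine ⟨alg B, 0, by rw [degree_zero]; exact WithBot.bot_lt_coe _, ?_⟩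
    rw [hDval, hB]; simp
  | succ n ih =>
    rcases Nat.eq_zero_or_pos n with rfl | hn
    · -- e = 1
      set lc := S.leadingCoeff with hlc
      have hlc0 : lc ≠ 0 := leadingCoeff_ne_zero.mpr hS0
      set Sm := S * C lc⁻¹ with hSm
      have hSmm : Sm.Monic := monic_mul_leadingCoeff_inv hS0
      obtain ⟨B, hB⟩ := antideriv (C lc⁻¹ * (A /ₘ Sm))
      refine ⟨alg B, A %ₘ Sm, ?_, ?_⟩
      · have h1 := degree_modByMonic_lt A hSmm
        rwa [hSm, degree_mul_C (inv_ne_zero hlc0), degree_eq_natDegree hS0] at h1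
      · rw [hDval, hB]
        have hpoly : alg A = alg (C lc⁻¹ * (A /ₘ Sm)) * (alg S) + alg (A %ₘ Sm) := by
          rw [← map_mul, ← map_add]
          congr 1
          linear_combination (A /ₘ Sm) * hSm - modByMonic_add_div A Sm
        rw [pow_one, hpoly, add_div, mul_div_cancel_right₀ _ hSf0]
    · -- e = n+1 ≥ 2
      obtain ⟨p, rfl⟩ : ∃ p, n = p + 1 := ⟨n - 1, by omega⟩
      obtain ⟨u, v, huv⟩ := hS
      have hc0 : (((p:K) + 1)) ≠ 0 := Nat.cast_add_one_ne_zero p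
      set w := A * v with hw
      set c : K := ((p : K) + 1) with hc
      set X' := alg (C c⁻¹ * Polynomial.derivative w) with hX'def
      set A' := A * u + C c⁻¹ * Polynomial.derivative w with hA'
      have hγ : alg (C c⁻¹) * (((p+1 : ℕ) : RatFunc K)) = 1 := by
        rw [← map_natCast (alg), ← Polynomial.C_eq_natCast, ← map_mul, ← C_mul]
        have hcc : c⁻¹ * (((p+1:ℕ)) : K) = 1 := by
          have : (((p+1:ℕ)) : K) = c := by rw [hc]; push_cast; ring
          rw [this, inv_mul_cancel₀ hc0]
        rw [hcc, C_1, map_one]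
      have hk1 : alg A = alg (A * u) * alg S + alg w * alg (Polynomial.derivative S) := by
        rw [← map_mul, ← map_mul, ← map_add]
        congr 1
        linear_combination (-A) * huv
      have hT0 : (alg S) ^ (p+1) ≠ 0 := pow_ne_zero _ hSf0
      have hDT : D ((alg S) ^ (p+1))
          = ((p+1 : ℕ) : RatFunc K) * (alg S)^p * alg (Polynomial.derivative S) := by
        rw [← map_pow, hDval, derivative_pow]
        simp [map_mul, map_pow, Polynomial.C_eq_natCast, map_natCast]
      have hk2 : D (alg (C c⁻¹ * w) / (alg S) ^ (p+1))
          = X' / (alg S) ^ (p+1)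
            - alg w * alg (Polynomial.derivative S) / (alg S) ^ (p+2) := by
        rw [isDeriv_div hD _ _ hT0, hDval, hDT, derivative_C_mul, ← hX'def]
        exact fieldid1 (alg S) (alg (Polynomial.derivative S)) (alg w)
          (alg (Polynomial.derivative w)) (alg (C c⁻¹)) _ _ _ hSf0 hγ
          (map_mul _ _ _) (by rw [hX'def, map_mul]) p
      obtain ⟨g', a', ha', hgeq⟩ := ih A'
      refine ⟨g' + (- (alg (C c⁻¹ * w) / (alg S) ^ (p+1))), a', ha', ?_⟩
      rw [hD.1, isDeriv_neg hD, hk2]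
      have hA'map : alg A' = alg (A * u) + X' := by rw [hA', map_add, hX'def]
      have key := fieldid2 (alg S) (alg (Polynomial.derivative S)) (alg (A*u)) (alg w) X'
        (alg A) hSf0 p hk1
      linear_combination key + hgeq - hA'map / (alg S)^(p+1)
end Hermite

-- squarefree primitive => coprime with derivative, in R[X] for R UFD char zero
lemma relprime_deriv {R : Type*} [CommRing R] [IsDomain R] [UniqueFactorizationMonoid R]
    [CharZero R] {f : R[X]} (hprim : f.IsPrimitive) (hsq : Squarefree f) :
    IsRelPrime f (Polynomial.derivative f) := by
  have hf0 : f ≠ 0 := by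
    rintro rfl
    exact not_isUnit_zero (hprim 0 (dvd_zero _))
  intro d hdf hdf'
  by_contra hdu
  have hd0 : d ≠ 0 := fun h => hf0 (by simpa [h] using hdf)
  obtain ⟨π, hπirr, hπd⟩ := WfDvdMonoid.exists_irreducible_factor hdu hd0
  have hπ : Prime π := (UniqueFactorizationMonoid.irreducible_iff_prime).mp hπirr
  have hπf : π ∣ f := hπd.trans hdf
  have hπf' : π ∣ Polynomial.derivative f := hπd.trans hdf'
  rcases Nat.eq_zero_or_pos π.natDegree with h0 | hpos
  · obtain ⟨a, rfl⟩ := Polynomial.natDegree_eq_zero.mp h0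
    exact hπirr.not_isUnit (isUnit_C.mpr (hprim a hπf))
  · obtain ⟨g, hg⟩ := hπf
    have hπg : ¬ π ∣ g := fun hdvd => hπirr.not_isUnit
      (hsq π (by rw [hg]; exact mul_dvd_mul_left π hdvd))
    have hder : Polynomial.derivative f
        = Polynomial.derivative π * g + π * Polynomial.derivative g := by
      rw [hg, derivative_mul]
    have hπdg : π ∣ Polynomial.derivative π * g := by
      have : π ∣ Polynomial.derivative f - π * Polynomial.derivative g :=
        dvd_sub hπf' (Dvd.intro _ rfl)
      rwa [hder, add_sub_cancel_right] at this
    rcases hπ.dvd_mul.mp hπdg with h | h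
    · have hd'0 : Polynomial.derivative π ≠ 0 := fun hz => by
        have := natDegree_eq_zero_of_derivative_eq_zero hz
        omega
      have := Polynomial.natDegree_le_of_dvd h hd'0
      have h2 := Polynomial.natDegree_derivative_lt (by omega : π.natDegree ≠ 0)
      omega
    · exact hπg h

-- primitive q, map q ∣ map p ⟹ q ∣ p
lemma dvd_of_map_dvd_map {R K : Type*} [CommRing R] [IsDomain R] [Field K]
    [Algebra R K] [IsFractionRing R K] [NormalizedGCDMonoid R]
    {q p : R[X]} (hq : q.IsPrimitive) (h : q.map (algebraMap R K) ∣ p.map (algebraMap R K)) :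
    q ∣ p := by
  obtain ⟨r, hr⟩ := h
  obtain ⟨⟨c, c0⟩, hc⟩ := IsLocalization.integerNormalization_map_to_map
    (nonZeroDivisors R) r
  have hc0 : c ≠ 0 := nonZeroDivisors.ne_zero c0
  have key : C c * p = q * IsLocalization.integerNormalization (nonZeroDivisors R) r := by
    apply Polynomial.map_injective (algebraMap R K) (IsFractionRing.injective R K)
    rw [Polynomial.map_mul, Polynomial.map_mul, hc, map_C, hr]
    rw [Algebra.smul_def, IsScalarTower.algebraMap_apply R K K[X],
      ← Polynomial.C_eq_algebraMap]
    ring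
  have hqc : q ∣ C c * p := key ▸ Dvd.intro _ rfl
  have hrel : IsRelPrime q (C c) := by
    intro d hdq hdc
    have hCc0 : (C c : R[X]) ≠ 0 := by simpa using hc0
    have hdeg : d.natDegree = 0 := by
      have := Polynomial.natDegree_le_of_dvd hdc hCc0
      simpa using this
    obtain ⟨a, rfl⟩ := Polynomial.natDegree_eq_zero.mp hdeg
    exact isUnit_C.mpr (hq a hdq)
  exact hrel.dvd_of_dvd_mul_left hqc

lemma isCoprime_map_deriv {R K : Type*} [CommRing R] [IsDomain R] [NormalizedGCDMonoid R]
    [UniqueFactorizationMonoid R] [CharZero R] [Field K] [Algebra R K] [IsFractionRing R K]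
    {f : R[X]} (hprim : f.IsPrimitive) (hsq : Squarefree f) (hf0 : f ≠ 0) :
    IsCoprime (f.map (algebraMap R K)) (Polynomial.derivative (f.map (algebraMap R K))) := by
  classical
  set F := f.map (algebraMap R K) with hF
  have hinj : Function.Injective (algebraMap R K) := IsFractionRing.injective R K
  have hF0 : F ≠ 0 := fun h => hf0 (Polynomial.map_eq_zero_iff hinj |>.mp h)
  rw [← EuclideanDomain.gcd_isUnit_iff]
  set d := EuclideanDomain.gcd F (Polynomial.derivative F) with hd
  have hdF : d ∣ F := EuclideanDomain.gcd_dvd_left _ _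
  have hdF' : d ∣ Polynomial.derivative F := EuclideanDomain.gcd_dvd_right _ _
  have hd0 : d ≠ 0 := fun h => hF0 (by simpa [h] using hdF)
  obtain ⟨⟨c, c0⟩, hc⟩ := IsLocalization.integerNormalization_map_to_map (nonZeroDivisors R) d
  have hc0 : c ≠ 0 := nonZeroDivisors.ne_zero c0
  set N := IsLocalization.integerNormalization (nonZeroDivisors R) d with hN
  have hmapN : N.map (algebraMap R K) = C (algebraMap R K c) * d := by
    rw [hc, Algebra.smul_def, IsScalarTower.algebraMap_apply R K K[X], ← Polynomial.C_eq_algebraMap]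
  have hN0 : N ≠ 0 := by
    intro h
    rw [h, Polynomial.map_zero] at hmapN
    have : (C (algebraMap R K c) : K[X]) ≠ 0 := by
      simpa using fun hh => hc0 (hinj (by simpa using hh))
    exact this (by
      rcases mul_eq_zero.mp hmapN.symm with h1 | h1
      · exact h1
      · exact absurd h1 hd0)
  have hcont0 : N.content ≠ 0 := fun h => hN0 (content_eq_zero_iff.mp h)
  set d' := N.primPart with hd'
  have hd'prim : d'.IsPrimitive := N.isPrimitive_primPart
  have heq : C (algebraMap R K N.content) * d'.map (algebraMap R K)
      = C (algebraMap R K c) * d := by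
    rw [← hmapN]
    conv_rhs => rw [N.eq_C_content_mul_primPart]
    rw [Polynomial.map_mul, map_C]
  have hβ0 : algebraMap R K c ≠ 0 := fun h => hc0 (hinj (by simpa using h))
  have hγ0 : algebraMap R K N.content ≠ 0 := fun h => hcont0 (hinj (by simpa using h))
  have h1 : d'.map (algebraMap R K) ∣ C (algebraMap R K c) * d :=
    ⟨C (algebraMap R K N.content), by linear_combination -heq⟩
  have hdvd_d : d'.map (algebraMap R K) ∣ d := by
    have h2 : d = C (algebraMap R K c)⁻¹ * (C (algebraMap R K c) * d) := by
      rw [← mul_assoc, ← C_mul, inv_mul_cancel₀ hβ0, C_1, one_mul]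
    rw [h2]
    exact h1.mul_left _
  have hd'f : d' ∣ f := dvd_of_map_dvd_map hd'prim (hdvd_d.trans hdF)
  have hd'f' : d' ∣ Polynomial.derivative f := by
    have h3 : derivative F = (Polynomial.derivative f).map (algebraMap R K) :=
      Polynomial.derivative_map f (algebraMap R K)
    rw [h3] at hdF'
    exact dvd_of_map_dvd_map hd'prim (hdvd_d.trans hdF')
  have hud' : IsUnit d' := relprime_deriv hprim hsq hd'f hd'f'
  have humap : IsUnit (d'.map (algebraMap R K)) := hud'.map (Polynomial.mapRingHom _)
  have h4 : d = C ((algebraMap R K c)⁻¹) * C (algebraMap R K N.content)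
      * d'.map (algebraMap R K) := by
    rw [mul_assoc, heq, ← mul_assoc, ← C_mul, inv_mul_cancel₀ hβ0, C_1, one_mul]
  rw [h4]
  exact ((isUnit_C.mpr (inv_ne_zero hβ0).isUnit).mul (isUnit_C.mpr hγ0.isUnit)).mul humap



/-- Lemma `le:bound`. Under Hypothesis (H), with `f = P/Q`: for every `i`
there are `gᵢ ∈ k(x,y)` and `aᵢ ∈ k(x)[y]` with `deg_y(aᵢ) < d_y*` such that
`D_x^i(f) = D_y(gᵢ) + aᵢ/Q*`; and for any such choice, the `d_y* + 1` rational functions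
`rᵢ = aᵢ/Q*`, `0 ≤ i ≤ d_y*`, are linearly dependent over `k(x)`. -/
theorem stmt_7 {k : Type*} [Field k] [CharZero k]
    (P Q : Polynomial (Polynomial k))
    (hP : P ≠ 0) (hQ : Q ≠ 0)
    (hPQdeg : P.degree < Q.degree)
    (hPQcop : IsRelPrime P Q)
    (hQprimY : Q.IsPrimitive)
    (m : ℕ) (hm : 0 < m) (q : Polynomial k) (Qi : ℕ → Polynomial (Polynomial k))
    (hfac : Q = Polynomial.C q * ∏ i ∈ Finset.range m, Qi i ^ (i + 1))
    (hQiprim : ∀ i < m, (Qi i).IsPrimitive)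
    (hQisqf : ∀ i < m, Squarefree (Qi i))
    (hQicop : ∀ i < m, ∀ j < m, i ≠ j → IsRelPrime (Qi i) (Qi j))
    (hQim : 0 < (Qi (m - 1)).natDegree)
    (Qs Qneg : Polynomial (Polynomial k))
    (hQs : Qs = ∏ i ∈ Finset.range m, Qi i)
    (hQneg : Q = Qs * Qneg)
    (Dy : RatFunc (RatFunc k) → RatFunc (RatFunc k)) (hDy : IsDeriv Dy)
    (hDyval : ∀ A : Polynomial (RatFunc k), Dy (kyToF A) = kyToF (Polynomial.derivative A))
    (Dx : RatFunc (RatFunc k) → RatFunc (RatFunc k)) (hDx : IsDeriv Dx)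
    (hDxval : ∀ A : Polynomial (Polynomial k), Dx (toF A) = toF (derivX A)) :
    (∀ i : ℕ, ∃ (g : RatFunc (RatFunc k)) (a : Polynomial (RatFunc k)),
      a.degree < (Qs.natDegree : WithBot ℕ) ∧
      Dx^[i] (toF P / toF Q) = Dy g + kyToF a / toF Qs) ∧
    (∀ (g : ℕ → RatFunc (RatFunc k)) (a : ℕ → Polynomial (RatFunc k)),
      (∀ i ≤ Qs.natDegree, (a i).degree < (Qs.natDegree : WithBot ℕ) ∧
        Dx^[i] (toF P / toF Q) = Dy (g i) + kyToF (a i) / toF Qs) →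
      ∃ η : Fin (Qs.natDegree + 1) → RatFunc k, (∃ i, η i ≠ 0) ∧
        ∑ i : Fin (Qs.natDegree + 1), ratToF (η i) * (kyToF (a (i : ℕ)) / toF Qs) = 0) := by
  haveI : DecidableEq k := Classical.decEq k
  haveI : CharZero (RatFunc k) :=
    charZero_of_injective_algebraMap (IsFractionRing.injective (Polynomial k) (RatFunc k))
  -- basic nonvanishing facts
  have hq0 : q ≠ 0 := by
    intro h; apply hQ; rw [hfac, h]; simp
  have hQi0 : ∀ i < m, Qi i ≠ 0 := by
    intro i hi h
    apply hQ
    rw [hfac, Finset.prod_eq_zero (Finset.mem_range.mpr hi) (by rw [h]; simp [Nat.succ_ne_zero])]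
    simp
  have hQs0 : Qs ≠ 0 := by
    rw [hQs]
    exact Finset.prod_ne_zero_iff.mpr fun i hi => hQi0 i (Finset.mem_range.mp hi)
  have hQsdeg : Qs.natDegree ≠ 0 := by
    have hdvd : Qi (m-1) ∣ Qs := hQs ▸ Finset.dvd_prod_of_mem _ (Finset.mem_range.mpr (by omega))
    have := Polynomial.natDegree_le_of_dvd hdvd hQs0
    omega
  -- primitivity and squarefreeness of Qs
  have haux : ∀ j, j ≤ m → (∏ i ∈ Finset.range j, Qi i).IsPrimitive ∧
      Squarefree (∏ i ∈ Finset.range j, Qi i) := by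
    intro j
    induction j with
    | zero => intro _; simp only [Finset.range_zero, Finset.prod_empty]
              exact ⟨isPrimitive_one, squarefree_one⟩
    | succ j ihj =>
      intro hjm
      obtain ⟨hprim, hsq⟩ := ihj (by omega)
      rw [Finset.prod_range_succ]
      have hrel : IsRelPrime (∏ i ∈ Finset.range j, Qi i) (Qi j) :=
        Finset.prod_induction _ (fun x => IsRelPrime x (Qi j))
          (fun a b ha hb => ha.mul_left hb) isRelPrime_one_left
          (fun i hi => hQicop i (by have := Finset.mem_range.mp hi; omega) j (by omega)
            (by have := Finset.mem_range.mp hi; omega))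
      exact ⟨hprim.mul (hQiprim j (by omega)),
        squarefree_mul_iff.mpr ⟨hrel, hsq, hQisqf j (by omega)⟩⟩
  have hQsprim : Qs.IsPrimitive := hQs ▸ (haux m le_rfl).1
  have hQssqf : Squarefree Qs := hQs ▸ (haux m le_rfl).2
  -- the squarefree part in k(x)[y]
  set S : Polynomial (RatFunc k) := toKy Qs with hSdef
  have hSmap : S = Qs.map (algebraMap (Polynomial k) (RatFunc k)) := rfl
  have hinj : Function.Injective (algebraMap (Polynomial k) (RatFunc k)) :=
    IsFractionRing.injective _ _
  have hSnd : S.natDegree = Qs.natDegree := by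
    rw [hSmap]; exact Polynomial.natDegree_map_eq_of_injective hinj Qs
  have hScop : IsCoprime S (Polynomial.derivative S) := by
    rw [hSmap]; exact isCoprime_map_deriv hQsprim hQssqf hQs0
  have hkypoly : ∀ A : Polynomial (RatFunc k), kyToF A = algebraMap _ _ A := fun _ => rfl
  have htoFky : ∀ A : Polynomial (Polynomial k), toF A = kyToF (toKy A) := fun _ => rfl
  have hkyinj : Function.Injective (kyToF (k := k)) := IsFractionRing.injective _ _
  have htoFinj : Function.Injective (toF (k := k)) := by
    intro a b h
    exact (Polynomial.map_injective _ hinj) (hkyinj h)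
  have htoF0 : ∀ A : Polynomial (Polynomial k), A ≠ 0 → toF A ≠ 0 := by
    intro A hA h
    exact hA (htoFinj (by simpa using h))
  have hQf0 : toF Q ≠ 0 := htoF0 Q hQ
  have hQsf0 : toF Qs ≠ 0 := htoF0 Qs hQs0
  -- representation of iterated derivatives
  have hrep : ∀ i : ℕ, ∃ (N : Polynomial (Polynomial k)) (e : ℕ), 0 < e ∧
      Dx^[i] (toF P / toF Q) = toF N / (toF Q) ^ e := by
    intro i
    induction i with
    | zero => exact ⟨P, 1, one_pos, by rw [Function.iterate_zero_apply, pow_one]⟩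
    | succ i ih =>
      obtain ⟨N, e, he, hEq⟩ := ih
      refine ⟨derivX N * Q ^ e - N * derivX (Q ^ e), 2 * e, by omega, ?_⟩
      rw [Function.iterate_succ_apply', hEq]
      have hQe0 : toF (Q ^ e) ≠ 0 := htoF0 _ (pow_ne_zero _ hQ)
      rw [show (toF Q) ^ e = toF (Q ^ e) from (map_pow _ _ _).symm]
      rw [isDeriv_div hDx _ _ hQe0, hDxval, hDxval]
      rw [← map_mul, ← map_mul, ← map_sub, ← map_pow, ← map_pow]
      congr 2
      rw [← pow_mul, mul_comm e 2]
  -- key product identity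
  have hQR0 : Q * (∏ i ∈ Finset.range m, Qi i ^ (m - 1 - i)) = Polynomial.C q * Qs ^ m := by
    rw [hfac, hQs, mul_assoc, ← Finset.prod_mul_distrib, ← Finset.prod_pow]
    congr 1
    apply Finset.prod_congr rfl
    intro i hi
    rw [← pow_add]
    congr 1
    have := Finset.mem_range.mp hi
    omega
  set R0 : Polynomial (Polynomial k) := ∏ i ∈ Finset.range m, Qi i ^ (m - 1 - i) with hR0def
  have hR00 : R0 ≠ 0 :=
    Finset.prod_ne_zero_iff.mpr fun i hi => pow_ne_zero _ (hQi0 i (Finset.mem_range.mp hi))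
  set u : RatFunc k := algebraMap (Polynomial k) (RatFunc k) q with hudef
  have hu0 : u ≠ 0 := by
    rw [hudef]
    intro h
    exact hq0 (hinj (by rw [h, map_zero]))
  have hCinv : kyToF (Polynomial.C u⁻¹) = (kyToF (Polynomial.C u))⁻¹ := by
    refine eq_inv_of_mul_eq_one_left ?_
    rw [← map_mul, ← Polynomial.C_mul, inv_mul_cancel₀ hu0, Polynomial.C_1, map_one]
  have hCu0 : kyToF (Polynomial.C u) ≠ 0 := by
    intro h
    apply hu0
    have := hkyinj (by simpa using h : kyToF (Polynomial.C u) = kyToF 0)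
    simpa using this
  -- conversion of denominators
  have hkS0 : kyToF S ≠ 0 := hQsf0
  have htoKyCq : toKy (Polynomial.C q) = Polynomial.C u := by
    show Polynomial.map _ _ = _
    rw [Polynomial.map_C]
  have hconv : ∀ (N : Polynomial (Polynomial k)) (e : ℕ),
      toF N / (toF Q) ^ e = kyToF (Polynomial.C u⁻¹ ^ e * toKy (N * R0 ^ e))
        / (kyToF S) ^ (m * e) := by
    intro N e
    have hpow : Q ^ e * R0 ^ e = Polynomial.C q ^ e * Qs ^ (m * e) := by
      rw [← mul_pow, hQR0, mul_pow, ← pow_mul]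
    have h5 : toKy Q ^ e * toKy (R0 ^ e) = Polynomial.C u ^ e * S ^ (m * e) := by
      rw [← map_pow, ← map_mul, hpow, map_mul, map_pow, map_pow, htoKyCq]
    have hinvmul : (Polynomial.C u⁻¹ : Polynomial (RatFunc k)) ^ e * Polynomial.C u ^ e = 1 := by
      rw [← mul_pow, ← Polynomial.C_mul, inv_mul_cancel₀ hu0, Polynomial.C_1, one_pow]
    have key : Polynomial.C u⁻¹ ^ e * toKy (N * R0 ^ e) * toKy Q ^ e
        = toKy N * S ^ (m * e) := by
      rw [map_mul]
      linear_combination (Polynomial.C u⁻¹ ^ e * toKy N) * h5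
        + (toKy N * S ^ (m * e)) * hinvmul
    rw [div_eq_div_iff (pow_ne_zero _ hQf0) (pow_ne_zero _ hkS0)]
    have hrhs : kyToF (Polynomial.C u⁻¹ ^ e * toKy (N * R0 ^ e)) * kyToF (toKy Q) ^ e
        = kyToF (toKy N) * kyToF S ^ (m * e) := by
      rw [← map_pow (kyToF (k:=k)) (toKy Q) e,
        ← map_mul (kyToF (k:=k)) (Polynomial.C u⁻¹ ^ e * toKy (N * R0 ^ e)) (toKy Q ^ e), key,
        map_mul (kyToF (k:=k)) (toKy N) (S ^ (m*e)), map_pow (kyToF (k:=k)) S (m*e)]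
    rw [htoFky N, show toF Q = kyToF (toKy Q) from rfl, hrhs]
  constructor
  · -- Part 1: existence
    intro i
    obtain ⟨N, e, he, hEq⟩ := hrep i
    obtain ⟨g, a, ha, hg⟩ := hermite Dy hDy hDyval S hScop (m*e)
      (Polynomial.C u⁻¹ ^ e * toKy (N * R0 ^ e))
    refine ⟨g, a, ?_, ?_⟩
    · rwa [hSnd] at ha
    · rw [hEq, hconv N e]
      exact hg
  · -- Part 2: linear dependence
    intro g a ha
    have hmem : ∀ i : Fin (Qs.natDegree + 1),
        a (i:ℕ) ∈ Polynomial.degreeLT (RatFunc k) Qs.natDegree :=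
      fun i => Polynomial.mem_degreeLT.mpr ((ha i (Nat.lt_succ_iff.mp i.2)).1)
    set v : Fin (Qs.natDegree + 1) → Polynomial.degreeLT (RatFunc k) Qs.natDegree :=
      fun i => ⟨a (i:ℕ), hmem i⟩ with hv
    haveI : Module.Finite (RatFunc k) (Polynomial.degreeLT (RatFunc k) Qs.natDegree) :=
      Module.Finite.equiv (Polynomial.degreeLTEquiv (RatFunc k) Qs.natDegree).symm
    have hfr : Module.finrank (RatFunc k) (Polynomial.degreeLT (RatFunc k) Qs.natDegree)
        = Qs.natDegree := by
      rw [(Polynomial.degreeLTEquiv (RatFunc k) Qs.natDegree).finrank_eq]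
      exact Module.finrank_fin_fun (RatFunc k)
    have hnli : ¬ LinearIndependent (RatFunc k) v := by
      intro h
      have := h.fintype_card_le_finrank
      rw [hfr, Fintype.card_fin] at this
      omega
    obtain ⟨η, hsum, i0, hi0⟩ := Fintype.not_linearIndependent_iff.mp hnli
    refine ⟨η, ⟨i0, hi0⟩, ?_⟩
    have hsum' : (∑ i : Fin (Qs.natDegree + 1), η i • a (i:ℕ)) = 0 := by
      have h2 := congrArg
        (fun x : Polynomial.degreeLT (RatFunc k) Qs.natDegree => (x : Polynomial (RatFunc k)))
        hsum
      simpa [hv] using h2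
    calc ∑ i : Fin (Qs.natDegree + 1), ratToF (η i) * (kyToF (a (i:ℕ)) / toF Qs)
        = ∑ i : Fin (Qs.natDegree + 1), kyToF (η i • a (i:ℕ)) / toF Qs := by
          refine Finset.sum_congr rfl fun i _ => ?_
          rw [← Polynomial.C_mul', map_mul, mul_div_assoc]
          rfl
      _ = (∑ i : Fin (Qs.natDegree + 1), kyToF (η i • a (i:ℕ))) / toF Qs := by
          rw [Finset.sum_div]
      _ = kyToF (∑ i : Fin (Qs.natDegree + 1), η i • a (i:ℕ)) / toF Qs := by rw [map_sum]
      _ = 0 := by rw [hsum', map_zero, zero_div]
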